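/- Reduction correctness for Theorem 2 (perfect assignment vs. scheduling with makespan 2): Given n jobs, p machines, and processing times p_{ij} ∈ {1, 2, ∞}, construct an a-GASP instance with N = {1,…,n}, A* = {a_1,…,a_p}, and for each i, j: {k : (a_j,k) ∈ S_i} equals {1} if p_{ij} = 2, equals {1,2} if p_{ij} = 1, and equals ∅ if p_{ij} = ∞. Then there exists an assignment ρ of jobs to machines with Σ_{i : ρ(i)=j} p_{ij} ≤ 2 for every machine j if and only if the a-GASP instance admits a perfect assignment. -/

import Mathlib

/-- The group of agents assigned to activity `a` under assignment `π`
(`none` stands for the void activity `a_∅`). -/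
def grp {ι α : Type*} [Fintype ι] [DecidableEq α] (π : ι → Option α) (a : α) : Finset ι :=
  Finset.univ.filter (fun i => π i = some a)

/-- An assignment is individually rational if every agent assigned to a non-void
activity `a` approves the alternative `(a, size of the group doing a)`.
`S i a` is the set of group sizes `k` such that agent `i` approves `(a, k)`. -/
def IndivRat {ι α : Type*} [Fintype ι] [DecidableEq α]
    (S : ι → α → Finset ℕ) (π : ι → Option α) : Prop :=
  ∀ i a, π i = some a → (grp π a).card ∈ S i a

/-- Nash stability: individual rationality plus no agent assigned to the void
activity approves joining an existing group. -/
def NashStable {ι α : Type*} [Fintype ι] [DecidableEq α]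
    (S : ι → α → Finset ℕ) (π : ι → Option α) : Prop :=
  IndivRat S π ∧ ∀ i a, π i = none → (grp π a).card + 1 ∉ S i a

/-- The number of agents assigned to a non-void activity. -/
def numActive {ι α : Type*} [Fintype ι] [DecidableEq α] (π : ι → Option α) : ℕ :=
  (Finset.univ.filter (fun i => π i ≠ none)).card

/-- Correctness of the scheduling reduction: jobs 0, …, n-1, machines
0, …, p-1, processing times pt i j ∈ {1, 2, ∞}. There is a schedule of makespan
at most 2 iff the a-GASP instance in which agent i approves of activity a_j with
group sizes {1} if pt i j = 2, {1,2} if pt i j = 1, and ∅ if pt i j = ∞, admits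
a perfect assignment. -/
theorem stmt16 (n p : ℕ) (pt : Fin n → Fin p → WithTop ℕ)
    (hpt : ∀ i j, pt i j = 1 ∨ pt i j = 2 ∨ pt i j = ⊤) :
    (∃ ρ : Fin n → Fin p, ∀ j : Fin p,
        ∑ i ∈ Finset.univ.filter (fun i => ρ i = j), pt i j ≤ (2 : WithTop ℕ)) ↔
      ∃ π : Fin n → Option (Fin p),
        IndivRat (fun i j =>
          if pt i j = 2 then ({1} : Finset ℕ)
          else if pt i j = 1 then ({1, 2} : Finset ℕ) else ∅) π ∧
        ∀ i, π i ≠ none := by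
  constructor
  · rintro ⟨ρ, hρ⟩
    refine ⟨fun i => some (ρ i), ?_, fun i => by simp⟩
    intro i j hij
    have hj : ρ i = j := by simpa using hij
    subst hj
    have hG : grp (fun i => some (ρ i)) (ρ i) =
        Finset.univ.filter (fun k => ρ k = ρ i) := by
      simp [grp]
    have hiG : i ∈ Finset.univ.filter (fun k => ρ k = ρ i) := by simp
    set G := Finset.univ.filter (fun k => ρ k = ρ i) with hGdef
    have hsum : ∑ k ∈ G, pt k (ρ i) ≤ 2 := hρ (ρ i)
    -- every member has pt ≥ 1
    have hone : ∀ k ∈ G, (1 : WithTop ℕ) ≤ pt k (ρ i) := by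
      intro k hk
      rcases hpt k (ρ i) with h | h | h
      · simp [h]
      · rw [h]; norm_num
      · -- pt k = ⊤ contradicts sum ≤ 2
        exfalso
        have := Finset.single_le_sum (f := fun k => pt k (ρ i))
          (fun k _ => zero_le) hk
        simp only [h] at this
        exact absurd (le_trans this hsum) (by simp)
    have hcard_le : (G.card : WithTop ℕ) ≤ 2 := by
      calc (G.card : WithTop ℕ) = ∑ _k ∈ G, (1 : WithTop ℕ) := by
            simp
        _ ≤ ∑ k ∈ G, pt k (ρ i) := Finset.sum_le_sum hone
        _ ≤ 2 := hsum
    have hcard2 : G.card ≤ 2 := by exact_mod_cast hcard_le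
    have hcard1 : 1 ≤ G.card := Finset.card_pos.mpr ⟨i, hiG⟩
    rw [hG]
    rcases hpt i (ρ i) with h | h | h
    · -- pt = 1 : S = {1,2}
      simp only [h]
      norm_num
      interval_cases (G.card) <;> simp
    · -- pt = 2 : must be alone
      simp only [h]
      norm_num
      -- show G.card = 1
      have hsplit : pt i (ρ i) + ∑ k ∈ G.erase i, pt k (ρ i) ≤ 2 := by
        rw [Finset.add_sum_erase G (fun k => pt k (ρ i)) hiG]
        exact hsum
      rw [h] at hsplit
      have herase : ∑ k ∈ G.erase i, pt k (ρ i) = 0 := by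
        have h0 : ∑ k ∈ G.erase i, pt k (ρ i) ≤ 0 :=
          (WithTop.add_le_add_iff_left (x := (2:WithTop ℕ)) (by norm_num)).mp
            (le_trans hsplit (by norm_num))
        exact le_antisymm h0 (zero_le)
      have hempty : G.erase i = ∅ := by
        by_contra hne
        obtain ⟨k, hk⟩ := Finset.nonempty_iff_ne_empty.mpr hne
        have h1 : (1 : WithTop ℕ) ≤ pt k (ρ i) := hone k (Finset.mem_of_mem_erase hk)
        have := Finset.single_le_sum (f := fun k => pt k (ρ i))
          (fun k _ => zero_le) hk
        simp only [herase] at this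
        exact absurd (le_trans h1 this) (by norm_num)
      have hcardone : G.card = 1 := by
        have hce := Finset.card_erase_of_mem hiG
        rw [hempty] at hce
        simp only [Finset.card_empty] at hce
        omega
      simpa using hcardone
    · -- pt = ⊤ impossible
      exfalso
      have := Finset.single_le_sum (f := fun k => pt k (ρ i))
        (fun k _ => zero_le) hiG
      simp only [h] at this
      exact absurd (le_trans this hsum) (by simp)
  · rintro ⟨π, hIR, hperf⟩
    have hget : ∀ i, (π i).isSome := fun i => Option.isSome_iff_ne_none.2 (hperf i)
    refine ⟨fun i => (π i).get (hget i), ?_⟩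
    intro j
    have hGeq : Finset.univ.filter (fun i => (π i).get (hget i) = j) = grp π j := by
      ext k
      simp only [Finset.mem_filter, Finset.mem_univ, true_and, grp]
      constructor
      · intro h; rw [← h, Option.some_get]
      · intro h; simp [h]
    rw [hGeq]
    set G := grp π j with hGdef
    rcases Nat.eq_zero_or_pos G.card with h0 | hpos
    · rw [Finset.card_eq_zero] at h0
      rw [h0]; simp
    · obtain ⟨i, hiG⟩ := Finset.card_pos.mp hpos
      have hi : π i = some j := by
        have := hiG; rw [hGdef] at this; simpa [grp] using this
      have hc := hIR i j hi
      simp only at hc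
      have hc12 : G.card = 1 ∨ G.card = 2 := by
        rcases hpt i j with h | h | h <;> simp [h] at hc <;> tauto
      rcases hc12 with h1 | h2
      · obtain ⟨k, hk⟩ := Finset.card_eq_one.mp h1
        have hik : k = i := by
          have h' := hiG; rw [hk, Finset.mem_singleton] at h'; exact h'.symm
        subst hik
        rw [hk]
        simp only [Finset.sum_singleton]
        have hck := hIR k j hi
        rcases hpt k j with h | h | h
        · simp only [h]; norm_num
        · simp [h]
        · simp [h] at hck
      · have hall : ∀ k ∈ G, pt k j = 1 := by
          intro k hk
          have hkj : π k = some j := by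
            have := hk; rw [hGdef] at this; simpa [grp] using this
          have hck := hIR k j hkj
          rw [← hGdef, h2] at hck
          rcases hpt k j with h | h | h
          · exact h
          · simp [h] at hck
          · simp [h] at hck
        calc ∑ k ∈ G, pt k j = ∑ _k ∈ G, (1 : WithTop ℕ) :=
              Finset.sum_congr rfl hall
          _ = (G.card : WithTop ℕ) := by simp
          _ ≤ 2 := by rw [h2]; norm_num
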